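/- Let 𝒢 = {s_1, ..., s_{2^n}} be a generating set as above (so 𝒢 ∪ {0} is a maximum class of VC dimension 1, and the s_i are linearly independent over 𝔽_2 as functions). Let ℬ be the set of all XOR-sums of at most k distinct elements of 𝒢, viewed in {0,1}^{2^n}. Then ℬ is a maximum class of VC dimension k: |ℬ| = Σ_{i=0}^{k} binomial(2^n, i) and VC(ℬ) = k. -/

import Mathlib

open Finset
open scoped symmDiff


/-- A concept class `C` shatters a coordinate set `I` if every assignment of
values to the coordinates in `I` is realized by some concept in `C`. -/
def Shatters {α : Type*} (C : Finset (α → Bool)) (I : Finset α) : Prop :=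
  ∀ f : α → Bool, ∃ c ∈ C, ∀ i ∈ I, c i = f i

/-- The VC dimension of a concept class: the largest cardinality of a shattered
coordinate set. -/
noncomputable def vcDim {α : Type*} [Fintype α] [DecidableEq α]
    (C : Finset (α → Bool)) : ℕ :=
  letI := Classical.decPred (Shatters C)
  (Finset.univ.filter (Shatters C)).sup Finset.card

/-- The subcube with free coordinate set `S` and anchor `a`: all vectors that
agree with `a` outside `S`.  Its dimension is `S.card`. -/
def subcube {α : Type*} [Fintype α] [DecidableEq α] (S : Finset α) (a : α → Bool) :
    Finset (α → Bool) :=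
  Finset.univ.filter fun c => ∀ i ∉ S, c i = a i

namespace GenAux

variable {N : ℕ}

def path (F : Fin N → Fin N) (hF : ∀ i : Fin N, 0 < (i : ℕ) → (F i : ℕ) < (i : ℕ)) (i : Fin N) :
    Finset (Fin N) :=
  if h : 0 < (i : ℕ) then insert i (path F hF (F i)) else {i}
termination_by (i : ℕ)
decreasing_by exact hF i h

variable (F : Fin N → Fin N) (hF : ∀ i : Fin N, 0 < (i : ℕ) → (F i : ℕ) < (i : ℕ))

lemma mem_path_self (i : Fin N) : i ∈ path F hF i := by
  rw [path]; split <;> simp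

lemma path_le : ∀ fuel (i : Fin N), (i : ℕ) ≤ fuel → ∀ j ∈ path F hF i, (j : ℕ) ≤ (i : ℕ) := by
  intro fuel
  induction fuel with
  | zero =>
    intro i hi j hj
    rw [path] at hj
    rw [dif_neg (by omega)] at hj
    simp at hj; omega
  | succ v IH =>
    intro i hi j hj
    rw [path] at hj
    by_cases h : 0 < (i : ℕ)
    · rw [dif_pos h] at hj
      rcases Finset.mem_insert.1 hj with h1 | h2
      · omega
      · have := IH (F i) (by have := hF i h; omega) j h2
        have := hF i h; omega
    · rw [dif_neg h] at hj; simp at hj; omega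

lemma path_le' {i j : Fin N} (hj : j ∈ path F hF i) : (j : ℕ) ≤ (i : ℕ) :=
  path_le F hF (i : ℕ) i le_rfl j hj

lemma path_subset : ∀ fuel (i : Fin N), (i : ℕ) ≤ fuel → ∀ m ∈ path F hF i,
    path F hF m ⊆ path F hF i := by
  intro fuel
  induction fuel with
  | zero =>
    intro i hi m hm
    rw [path, dif_neg (by omega : ¬ 0 < (i : ℕ))] at hm
    simp at hm; subst hm; exact Finset.Subset.refl _
  | succ v IH =>
    intro i hi m hm
    rw [path] at hm
    by_cases h : 0 < (i : ℕ)
    · rw [dif_pos h] at hm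
      rcases Finset.mem_insert.1 hm with h1 | h2
      · subst h1; exact Finset.Subset.refl _
      · have hs : path F hF m ⊆ path F hF (F i) :=
          IH (F i) (by have := hF i h; omega) m h2
        intro a ha
        rw [path, dif_pos h]
        exact Finset.mem_insert_of_mem (hs ha)
    · rw [dif_neg h] at hm; simp at hm; subst hm; exact Finset.Subset.refl _

lemma path_subset' {i m : Fin N} (hm : m ∈ path F hF i) : path F hF m ⊆ path F hF i :=
  path_subset F hF (i : ℕ) i le_rfl m hm

lemma mem_path_of_le : ∀ fuel (i : Fin N), (i : ℕ) ≤ fuel → ∀ m ∈ path F hF i,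
    ∀ a ∈ path F hF i, (a : ℕ) ≤ (m : ℕ) → a ∈ path F hF m := by
  intro fuel
  induction fuel with
  | zero =>
    intro i hi m hm a ha hle
    have h0 : ¬ 0 < (i : ℕ) := by omega
    rw [path, dif_neg h0] at hm
    rw [path, dif_neg h0] at ha
    simp at hm ha; subst hm; subst ha; exact mem_path_self F hF _
  | succ v IH =>
    intro i hi m hm a ha hle
    by_cases h : 0 < (i : ℕ)
    · rw [path, dif_pos h] at hm
      rw [path, dif_pos h] at ha
      rcases Finset.mem_insert.1 hm with h1 | h2
      · subst h1
        rw [path, dif_pos h]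
        rcases Finset.mem_insert.1 ha with g1 | g2
        · subst g1; exact Finset.mem_insert_self _ _
        · exact Finset.mem_insert_of_mem g2
      · rcases Finset.mem_insert.1 ha with g1 | g2
        · exfalso
          have hm' := path_le' F hF h2
          have := hF i h
          subst g1; omega
        · exact IH (F i) (by have := hF i h; omega) m h2 a g2 hle
    · rw [path, dif_neg h] at hm
      rw [path, dif_neg h] at ha
      simp at hm ha; subst hm; subst ha; exact mem_path_self F hF _

lemma mem_path_of_le' {i m a : Fin N} (hm : m ∈ path F hF i) (ha : a ∈ path F hF i)
    (hle : (a : ℕ) ≤ (m : ℕ)) : a ∈ path F hF m :=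
  mem_path_of_le F hF (i : ℕ) i le_rfl m hm a ha hle

lemma path_of_pos {c : Fin N} (hc : 0 < (c : ℕ)) :
    path F hF c = insert c (path F hF (F c)) := by
  rw [path, dif_pos hc]

lemma child_exists : ∀ fuel (i : Fin N), (i : ℕ) ≤ fuel → ∀ m ∈ path F hF i, m ≠ i →
    ∃ c, c ∈ path F hF i ∧ 0 < (c : ℕ) ∧ F c = m := by
  intro fuel
  induction fuel with
  | zero =>
    intro i hi m hm hne
    rw [path, dif_neg (by omega)] at hm
    simp at hm; exact absurd hm hne
  | succ v IH =>
    intro i hi m hm hne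
    by_cases h : 0 < (i : ℕ)
    · rw [path_of_pos F hF h] at hm
      rcases Finset.mem_insert.1 hm with h1 | h2
      · exact absurd h1 hne
      · by_cases hmf : m = F i
        · exact ⟨i, mem_path_self F hF i, h, hmf.symm⟩
        · obtain ⟨c, hc1, hc2, hc3⟩ := IH (F i) (by have := hF i h; omega) m h2 hmf
          refine ⟨c, ?_, hc2, hc3⟩
          rw [path_of_pos F hF h]
          exact Finset.mem_insert_of_mem hc1
    · rw [path, dif_neg h] at hm; simp at hm; exact absurd hm hne

lemma mem_path_child {c : Fin N} (hc : 0 < (c : ℕ)) : F c ∈ path F hF c := by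
  rw [path_of_pos F hF hc]
  exact Finset.mem_insert_of_mem (mem_path_self F hF _)

lemma child_unique {i c c' : Fin N} (hci : c ∈ path F hF i) (hci' : c' ∈ path F hF i)
    (hc : 0 < (c : ℕ)) (hc' : 0 < (c' : ℕ)) (hcc : F c = F c') : c = c' := by
  by_contra hne
  -- wlog c ≤ c'
  rcases le_total (c : ℕ) (c' : ℕ) with hle | hle
  · have h1 : c ∈ path F hF c' := mem_path_of_le' F hF hci' hci hle
    rw [path_of_pos F hF hc'] at h1
    rcases Finset.mem_insert.1 h1 with h | h
    · exact hne h
    · have h2 := path_le' F hF h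
      rw [← hcc] at h2
      have := hF c hc
      omega
  · have h1 : c' ∈ path F hF c := mem_path_of_le' F hF hci hci' hle
    rw [path_of_pos F hF hc] at h1
    rcases Finset.mem_insert.1 h1 with h | h
    · exact hne h.symm
    · have h2 := path_le' F hF h
      rw [hcc] at h2
      have := hF c' hc'
      omega

/-- The unique "child of `m` towards `i`". -/
noncomputable def chld (m i : Fin N) : Fin N :=
  if h : m ∈ path F hF i ∧ m ≠ i then (child_exists F hF (i : ℕ) i le_rfl m h.1 h.2).choose
  else i

lemma chld_spec {m i : Fin N} (h1 : m ∈ path F hF i) (h2 : m ≠ i) :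
    chld F hF m i ∈ path F hF i ∧ 0 < (chld F hF m i : ℕ) ∧ F (chld F hF m i) = m := by
  rw [chld, dif_pos ⟨h1, h2⟩]
  exact (child_exists F hF (i : ℕ) i le_rfl m h1 h2).choose_spec

lemma chld_eq_iff {m i c : Fin N} (h1 : m ∈ path F hF i) (h2 : m ≠ i)
    (hc : 0 < (c : ℕ)) (hfc : F c = m) : chld F hF m i = c ↔ c ∈ path F hF i := by
  obtain ⟨s1, s2, s3⟩ := chld_spec F hF h1 h2
  constructor
  · rintro rfl; exact s1
  · intro hci
    exact child_unique F hF s1 hci s2 hc (by rw [s3, hfc])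

/-- parity count -/
def cntP (D : Finset (Fin N)) (m : Fin N) : ℕ :=
  (D.filter (fun i => m ∈ path F hF i)).card

lemma odd_child (D : Finset (Fin N)) (m : Fin N)
    (h : Odd ((D.filter fun i => m ∈ path F hF i ∧ i ≠ m).card)) :
    ∃ c : Fin N, 0 < (c : ℕ) ∧ F c = m ∧ (m : ℕ) < (c : ℕ) ∧ Odd (cntP F hF D c) := by
  classical
  set A := D.filter fun i => m ∈ path F hF i ∧ i ≠ m with hA
  have hcard : A.card = ∑ c ∈ A.image (fun i => chld F hF m i),
      (A.filter (fun i => chld F hF m i = c)).card :=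
    Finset.card_eq_sum_card_fiberwise (fun i hi => Finset.mem_image_of_mem _ hi)
  have : ∃ c ∈ A.image (fun i => chld F hF m i),
      Odd ((A.filter (fun i => chld F hF m i = c)).card) := by
    by_contra hcon
    push_neg at hcon
    simp only [Nat.not_odd_iff_even] at hcon
    have : Even A.card := by
      rw [hcard]; exact Finset.even_sum _ hcon
    rw [Nat.even_iff] at this
    rw [Nat.odd_iff] at h
    omega
  obtain ⟨c, hcmem, hcodd⟩ := this
  obtain ⟨i0, hi0A, hi0c⟩ := Finset.mem_image.1 hcmem
  rw [hA, Finset.mem_filter] at hi0A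
  obtain ⟨hs1, hs2, hs3⟩ := chld_spec F hF hi0A.2.1 (Ne.symm hi0A.2.2)
  rw [hi0c] at hs2 hs3
  have hmc : (m : ℕ) < (c : ℕ) := by
    have := hF c hs2; rw [hs3] at this; omega
  refine ⟨c, hs2, hs3, hmc, ?_⟩
  have hset : A.filter (fun i => chld F hF m i = c) = D.filter (fun i => c ∈ path F hF i) := by
    ext i
    simp only [hA, Finset.mem_filter, and_assoc]
    constructor
    · rintro ⟨hiD, hmi, hine, hch⟩
      refine ⟨hiD, ?_⟩
      rw [← hch]
      exact (chld_spec F hF hmi (Ne.symm hine)).1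
    · rintro ⟨hiD, hci⟩
      have hmi : m ∈ path F hF i := path_subset' F hF hci (by rw [← hs3]; exact mem_path_child F hF hs2)
      have hile : (c : ℕ) ≤ (i : ℕ) := path_le' F hF hci
      have hine : i ≠ m := by
        intro hh; rw [hh] at hile; omega
      exact ⟨hiD, hmi, hine, (chld_eq_iff F hF hmi (Ne.symm hine) hs2 hs3).2 hci⟩
  rw [hset] at hcodd
  exact hcodd

lemma walk (D : Finset (Fin N)) : ∀ fuel (m : Fin N), N - (m : ℕ) ≤ fuel →
    Odd ((D.filter fun i => m ∈ path F hF i ∧ i ≠ m).card) →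
    ∃ z, z ∈ D ∧ m ∈ path F hF z ∧ m ≠ z ∧ Odd (cntP F hF D z) ∧
      ∀ w, m ∈ path F hF w → w ∈ path F hF z → w ≠ m → w ≠ z →
        (Odd (cntP F hF D w) ∧ w ∉ D) := by
  intro fuel
  induction fuel with
  | zero =>
    intro m hm _
    have := m.isLt; omega
  | succ v IH =>
    intro m hm hodd
    obtain ⟨c, hc0, hFc, hmc, hcnt⟩ := odd_child F hF D m hodd
    have hmpc : m ∈ path F hF c := by rw [← hFc]; exact mem_path_child F hF hc0
    have hmne : m ≠ c := by intro h; rw [h] at hmc; omega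
    have hpathc : path F hF c = insert c (path F hF m) := by
      rw [path_of_pos F hF hc0, hFc]
    by_cases hcD : c ∈ D
    · refine ⟨c, hcD, hmpc, hmne, hcnt, ?_⟩
      intro w hmw hwc hwm hwc'
      exfalso
      rw [hpathc] at hwc
      rcases Finset.mem_insert.1 hwc with h | h
      · exact hwc' h
      · have h1 := path_le' F hF h
        have h2 := path_le' F hF hmw
        exact hwm (Fin.ext (by omega))
    · have hstrict : (D.filter fun i => c ∈ path F hF i ∧ i ≠ c) =
          D.filter (fun i => c ∈ path F hF i) := by
        ext i
        simp only [Finset.mem_filter, and_assoc]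
        refine ⟨fun h => ⟨h.1, h.2.1⟩, fun h => ⟨h.1, h.2, ?_⟩⟩
        intro hic; rw [hic] at h; exact hcD h.1
      have hodd' : Odd ((D.filter fun i => c ∈ path F hF i ∧ i ≠ c).card) := by
        rw [hstrict]; exact hcnt
      obtain ⟨z, hz1, hz2, hz3, hz4, hz5⟩ := IH c (by have := m.isLt; omega) hodd'
      have hcz : (c : ℕ) ≤ (z : ℕ) := path_le' F hF hz2
      refine ⟨z, hz1, path_subset' F hF hz2 hmpc, ?_, hz4, ?_⟩
      · intro h; rw [h] at hmc; omega
      · intro w hmw hwz hwm hwz'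
        rcases le_total (w : ℕ) (c : ℕ) with hle | hle
        · have hwc : w ∈ path F hF c := mem_path_of_le' F hF hz2 hwz hle
          rw [hpathc] at hwc
          rcases Finset.mem_insert.1 hwc with h | h
          · subst h; exact ⟨hcnt, hcD⟩
          · exfalso
            have h1 := path_le' F hF h
            have h2 := path_le' F hF hmw
            exact hwm (Fin.ext (by omega))
        · have hcw : c ∈ path F hF w := mem_path_of_le' F hF hwz hz2 hle
          by_cases hwceq : w = c
          · subst hwceq; exact ⟨hcnt, hcD⟩
          · exact hz5 w hcw hwz hwceq hwz'

end GenAux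

open GenAux

section SLemmas

variable {N : ℕ} {α : Type*} [DecidableEq α] [NeZero N]
variable (F : Fin N → Fin N) (hF : ∀ i : Fin N, 0 < (i : ℕ) → (F i : ℕ) < (i : ℕ))

lemma sEval (s : Fin N → α → Bool) (p : Fin N ≃ α)
    (hb : s 0 = fun x => decide (x = p 0))
    (hstep' : ∀ i : Fin N, 0 < (i : ℕ) → s i = fun x => xor (s (F i) x) (decide (x = p i))) :
    ∀ fuel (i : Fin N), (i : ℕ) ≤ fuel → ∀ x, s i x = decide (p.symm x ∈ path F hF i) := by
  intro fuel
  induction fuel with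
  | zero =>
    intro i hi x
    have hi0 : i = 0 := Fin.ext (by simp only [Fin.val_zero]; omega)
    subst hi0
    rw [path, dif_neg (by simp), hb]
    simp only [Finset.mem_singleton]
    exact decide_eq_decide.2 (by rw [Equiv.symm_apply_eq])
  | succ v IH =>
    intro i hi x
    by_cases h : 0 < (i : ℕ)
    · rw [hstep' i h]
      simp only
      rw [IH (F i) (by have := hF i h; omega) x]
      rw [path_of_pos F hF h]
      by_cases hx : p.symm x = i
      · have hxp : x = p i := by rw [← hx, Equiv.apply_symm_apply]
        have hnotin : i ∉ path F hF (F i) := by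
          intro hcon
          have := path_le' F hF hcon
          have := hF i h
          omega
        rw [hx]
        simp [hxp, hnotin]
      · have hxp : ¬(x = p i) := by
          intro hcon; apply hx; rw [hcon, Equiv.symm_apply_apply]
        simp [hxp, Finset.mem_insert, hx]
    · have hi0 : i = 0 := Fin.ext (by simp only [Fin.val_zero]; omega)
      subst hi0
      rw [path, dif_neg (by simpa using h), hb]
      simp only [Finset.mem_singleton]
      exact decide_eq_decide.2 (by rw [Equiv.symm_apply_eq])

end SLemmas

lemma filter_symmDiff_parity {β : Type*} [DecidableEq β] (T T' : Finset β)
    (P : β → Prop) [DecidablePred P] :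
    ((T ∆ T').filter P).card % 2 = ((T.filter P).card + (T'.filter P).card) % 2 := by
  have hset : (T ∆ T').filter P = (T.filter P) ∆ (T'.filter P) := by
    ext a
    simp only [Finset.mem_filter, Finset.mem_symmDiff]
    tauto
  rw [hset]
  set X := T.filter P
  set Y := T'.filter P
  have h1 : X ∆ Y = (X \ Y) ∪ (Y \ X) := by
    rw [symmDiff_def, Finset.sup_eq_union]
  have hdisj : Disjoint (X \ Y) (Y \ X) := by
    apply Finset.disjoint_left.2
    intro a ha hb
    simp only [Finset.mem_sdiff] at ha hb
    exact ha.2 hb.1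
  have hc1 : (X ∆ Y).card = (X \ Y).card + (Y \ X).card := by
    rw [h1, Finset.card_union_of_disjoint hdisj]
  have hc2 := Finset.card_sdiff_add_card_inter X Y
  have hc3 := Finset.card_sdiff_add_card_inter Y X
  rw [Finset.inter_comm] at hc3
  omega


lemma key_sep {N : ℕ} (F : Fin N → Fin N) (hF : ∀ i : Fin N, 0 < (i : ℕ) → (F i : ℕ) < (i : ℕ))
    (T T' : Finset (Fin N)) (hne : T ≠ T') :
    ∃ m ∈ T ∆ T', ((T.filter fun i => m ∈ path F hF i).card % 2) ≠
      ((T'.filter fun i => m ∈ path F hF i).card % 2) := by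
  classical
  have hnonempty : (T ∆ T').Nonempty := Finset.symmDiff_nonempty.2 hne
  refine ⟨(T ∆ T').max' hnonempty, Finset.max'_mem _ _, ?_⟩
  set m := (T ∆ T').max' hnonempty with hm
  have hone : ((T ∆ T').filter fun i => m ∈ path F hF i) = {m} := by
    ext i
    simp only [Finset.mem_filter, Finset.mem_singleton]
    constructor
    · rintro ⟨hi, hpi⟩
      have h1 := path_le' F hF hpi
      have h2 : i ≤ m := Finset.le_max' _ i hi
      exact le_antisymm h2 h1
    · rintro rfl
      exact ⟨Finset.max'_mem _ _, mem_path_self F hF m⟩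
  have hpar := filter_symmDiff_parity T T' (fun i => m ∈ path F hF i)
  rw [hone] at hpar
  simp only [Finset.card_singleton] at hpar
  omega

lemma card_small_powerset {β : Type*} [Fintype β] [DecidableEq β] (k : ℕ) :
    ((Finset.univ : Finset β).powerset.filter fun T => T.card ≤ k).card
      = ∑ i ∈ Finset.range (k + 1), (Fintype.card β).choose i := by
  classical
  have hset : ((Finset.univ : Finset β).powerset.filter fun T => T.card ≤ k)
      = (Finset.range (k + 1)).biUnion (fun i => Finset.powersetCard i Finset.univ) := by
    ext T
    simp only [Finset.mem_filter, Finset.mem_powerset, Finset.mem_biUnion, Finset.mem_range,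
      Finset.mem_powersetCard, Nat.lt_succ_iff]
    constructor
    · rintro ⟨hsub, hcard⟩
      exact ⟨T.card, hcard, hsub, rfl⟩
    · rintro ⟨i, hik, hsub, hcard⟩
      exact ⟨hsub, hcard ▸ hik⟩
  rw [hset, Finset.card_biUnion]
  · apply Finset.sum_congr rfl
    intro i _
    rw [Finset.card_powersetCard, Finset.card_univ]
  · intro i _ j _ hij
    apply Finset.disjoint_left.2
    intro T hTi hTj
    rw [Finset.mem_powersetCard] at hTi hTj
    exact hij (hTi.2 ▸ hTj.2)

theorem sums_of_generating_set_maximum (n k : ℕ) (hk : k ≤ 2 ^ n)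
    (s : Fin (2 ^ n) → ((Fin n → Bool) → Bool))
    (p : Fin (2 ^ n) ≃ (Fin n → Bool))
    (hbase : s 0 = fun x => decide (x = p 0))
    (hstep : ∀ i : Fin (2 ^ n), 0 < (i : ℕ) → ∃ j : Fin (2 ^ n), (j : ℕ) < (i : ℕ) ∧
      s i = fun x => xor (s j x) (decide (x = p i))) :
    ((Finset.univ : Finset ((Fin n → Bool) → Bool)).filter
        (fun g => ∃ T : Finset (Fin (2 ^ n)), T.card ≤ k ∧
          ∀ x, (g x = true ↔ (T.filter (fun i => s i x = true)).card % 2 = 1))).card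
      = ∑ i ∈ Finset.range (k + 1), (2 ^ n).choose i ∧
    vcDim ((Finset.univ : Finset ((Fin n → Bool) → Bool)).filter
        (fun g => ∃ T : Finset (Fin (2 ^ n)), T.card ≤ k ∧
          ∀ x, (g x = true ↔ (T.filter (fun i => s i x = true)).card % 2 = 1)))
      = k := by
  classical
  have hN0 : 0 < 2 ^ n := Nat.pow_pos (by norm_num)
  haveI : NeZero (2 ^ n) := ⟨hN0.ne'⟩
  -- extract the parent function
  obtain ⟨F, hFprop⟩ : ∃ F : Fin (2 ^ n) → Fin (2 ^ n), ∀ i : Fin (2 ^ n), 0 < (i : ℕ) →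
      (F i : ℕ) < (i : ℕ) ∧ s i = fun x => xor (s (F i) x) (decide (x = p i)) := by
    choose Fp hFp using hstep
    exact ⟨fun i => if h : 0 < (i : ℕ) then Fp i h else i,
      fun i h => by simp only [dif_pos h]; exact hFp i h⟩
  have hF : ∀ i : Fin (2 ^ n), 0 < (i : ℕ) → (F i : ℕ) < (i : ℕ) := fun i h => (hFprop i h).1
  have hs : ∀ (i : Fin (2 ^ n)) (x : Fin n → Bool),
      s i x = decide (p.symm x ∈ path F hF i) :=
    fun i x => sEval F hF s p hbase (fun i h => (hFprop i h).2) (i : ℕ) i le_rfl x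
  set gT : Finset (Fin (2 ^ n)) → (Fin n → Bool) → Bool :=
    fun T x => decide ((T.filter (fun i => s i x = true)).card % 2 = 1) with hgT
  have hfilt : ∀ (T : Finset (Fin (2 ^ n))) (m : Fin (2 ^ n)),
      T.filter (fun i => s i (p m) = true) = T.filter (fun i => m ∈ path F hF i) := by
    intro T m
    apply Finset.filter_congr
    intro i _
    rw [hs i (p m)]
    simp
  -- separation
  have hsep : ∀ T T' : Finset (Fin (2 ^ n)), T ≠ T' →
      ∃ m ∈ T ∆ T', gT T (p m) ≠ gT T' (p m) := by
    intro T T' hne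
    obtain ⟨m, hmem, hpar⟩ := key_sep F hF T T' hne
    refine ⟨m, hmem, ?_⟩
    rw [hgT]
    simp only [ne_eq, decide_eq_decide]
    rw [hfilt T m, hfilt T' m]
    omega
  -- membership description
  have hmemB : ∀ g : (Fin n → Bool) → Bool,
      (g ∈ (Finset.univ : Finset ((Fin n → Bool) → Bool)).filter
        (fun g => ∃ T : Finset (Fin (2 ^ n)), T.card ≤ k ∧
          ∀ x, (g x = true ↔ (T.filter (fun i => s i x = true)).card % 2 = 1)))
      ↔ ∃ T : Finset (Fin (2 ^ n)), T.card ≤ k ∧ g = gT T := by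
    intro g
    rw [Finset.mem_filter]
    simp only [Finset.mem_univ, true_and]
    constructor
    · rintro ⟨T, hTk, hTx⟩
      refine ⟨T, hTk, funext fun x => ?_⟩
      have := hTx x
      rw [hgT]
      simp only
      cases hgx : g x
      · simp [hgx] at this
        simp [this]
      · simp [hgx] at this
        simp [this]
    · rintro ⟨T, hTk, rfl⟩
      refine ⟨T, hTk, fun x => ?_⟩
      rw [hgT]
      simp
  constructor
  · -- cardinality
    have himg : (Finset.univ : Finset ((Fin n → Bool) → Bool)).filter
        (fun g => ∃ T : Finset (Fin (2 ^ n)), T.card ≤ k ∧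
          ∀ x, (g x = true ↔ (T.filter (fun i => s i x = true)).card % 2 = 1))
        = ((Finset.univ : Finset (Fin (2 ^ n))).powerset.filter
            fun T => T.card ≤ k).image gT := by
      ext g
      rw [hmemB g, Finset.mem_image]
      constructor
      · rintro ⟨T, hTk, rfl⟩
        exact ⟨T, Finset.mem_filter.2 ⟨Finset.mem_powerset.2 (Finset.subset_univ T), hTk⟩, rfl⟩
      · rintro ⟨T, hT, rfl⟩
        exact ⟨T, (Finset.mem_filter.1 hT).2, rfl⟩
    rw [himg, Finset.card_image_of_injOn, card_small_powerset, Fintype.card_fin]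
    intro T _ T' _ hTT'
    by_contra hne
    obtain ⟨m, _, hgne⟩ := hsep T T' hne
    exact hgne (congrFun hTT' (p m))
  · -- VC dimension
    have hupper : ∀ I : Finset (Fin n → Bool),
        _root_.Shatters ((Finset.univ : Finset ((Fin n → Bool) → Bool)).filter
          (fun g => ∃ T : Finset (Fin (2 ^ n)), T.card ≤ k ∧
            ∀ x, (g x = true ↔ (T.filter (fun i => s i x = true)).card % 2 = 1))) I →
        I.card ≤ k := by
      intro I hI
      by_contra hcon
      push_neg at hcon
      obtain ⟨I', hI'sub, hI'card⟩ := Finset.exists_subset_card_eq (Nat.succ_le_of_lt hcon)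
      have hI' : _root_.Shatters _ I' := fun f => by
        obtain ⟨c, hc1, hc2⟩ := hI f
        exact ⟨c, hc1, fun x hx => hc2 x (hI'sub hx)⟩
      set J : Finset (Fin (2 ^ n)) := I'.image p.symm with hJ
      have hJcard : J.card = k + 1 := by
        rw [hJ, Finset.card_image_of_injective _ p.symm.injective, hI'card]
      obtain ⟨c, hcB, hcagree⟩ := hI' (gT J)
      obtain ⟨T, hTk, rfl⟩ := (hmemB c).1 hcB
      have hpar : ∀ m ∈ J, (T.filter (fun i => m ∈ path F hF i)).card % 2
          = (J.filter (fun i => m ∈ path F hF i)).card % 2 := by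
        intro m hm
        obtain ⟨x, hxI, hxm⟩ := Finset.mem_image.1 hm
        have hpm : p m ∈ I' := by
          rw [← hxm, Equiv.apply_symm_apply]; exact hxI
        have := hcagree (p m) hpm
        rw [hgT] at this
        simp only [decide_eq_decide] at this
        rw [hfilt T m, hfilt J m] at this
        omega
      have hTJ : T ≠ J := by
        intro h; rw [h] at hTk; omega
      set D : Finset (Fin (2 ^ n)) := T ∆ J with hD
      have hDeven : ∀ m ∈ J, (D.filter fun i => m ∈ path F hF i).card % 2 = 0 := by
        intro m hm
        have h1 : (D.filter fun i => m ∈ path F hF i).card % 2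
            = ((T.filter fun i => m ∈ path F hF i).card
              + (J.filter fun i => m ∈ path F hF i).card) % 2 := by
          rw [hD]; exact filter_symmDiff_parity T J (fun i => m ∈ path F hF i)
        have := hpar m hm
        omega
      -- walk-based injection from J \ T to T \ J
      have hwalkres : ∀ m : Fin (2 ^ n), ∃ z : Fin (2 ^ n), m ∈ J \ T →
          z ∈ T \ J ∧ m ∈ path F hF z ∧
          (∀ w, m ∈ path F hF w → w ∈ path F hF z → w ≠ m → w ≠ z → w ∉ D) := by
        intro m
        by_cases hm : m ∈ J \ T
        · rw [Finset.mem_sdiff] at hm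
          have hmD : m ∈ D := Finset.mem_symmDiff.2 (Or.inr ⟨hm.1, hm.2⟩)
          have hmfilter : m ∈ D.filter (fun i => m ∈ path F hF i) :=
            Finset.mem_filter.2 ⟨hmD, mem_path_self F hF m⟩
          have herase : D.filter (fun i => m ∈ path F hF i ∧ i ≠ m)
              = (D.filter (fun i => m ∈ path F hF i)).erase m := by
            ext i
            simp only [Finset.mem_filter, Finset.mem_erase]
            tauto
          have hodd : Odd ((D.filter fun i => m ∈ path F hF i ∧ i ≠ m).card) := by
            rw [herase, Finset.card_erase_of_mem hmfilter, Nat.odd_iff]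
            have hpos : 0 < (D.filter (fun i => m ∈ path F hF i)).card :=
              Finset.card_pos.2 ⟨m, hmfilter⟩
            have := hDeven m hm.1
            omega
          obtain ⟨z, hz1, hz2, hz3, hz4, hz5⟩ :=
            walk F hF D (2 ^ n) m (by omega) hodd
          have hzJ : z ∉ J := by
            intro hzJ
            have := hDeven z hzJ
            rw [Nat.odd_iff] at hz4
            unfold GenAux.cntP at hz4
            omega
          have hzT : z ∈ T := by
            rcases Finset.mem_symmDiff.1 hz1 with h | h
            · exact h.1
            · exact absurd h.1 hzJ
          exact ⟨z, fun _ => ⟨Finset.mem_sdiff.2 ⟨hzT, hzJ⟩, hz2,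
            fun w h1 h2 h3 h4 => (hz5 w h1 h2 h3 h4).2⟩⟩
        · exact ⟨m, fun h => absurd h hm⟩
      choose φ hφ using hwalkres
      have hcards : (T \ J).card < (J \ T).card := by
        have h1 := Finset.card_sdiff_add_card_inter J T
        have h2 := Finset.card_sdiff_add_card_inter T J
        rw [Finset.inter_comm] at h2
        omega
      obtain ⟨m1, hm1, m2, hm2, hmne, hmeq⟩ :=
        Finset.exists_ne_map_eq_of_card_lt_of_maps_to hcards (fun m hm => (hφ m hm).1)
      have key : ∀ a b : Fin (2 ^ n), a ∈ J \ T → b ∈ J \ T → φ a = φ b →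
          (a : ℕ) < (b : ℕ) → False := by
        intro a b ha hb hphieq hlt
        obtain ⟨hza, hpa, hwa⟩ := hφ a ha
        obtain ⟨hzb, hpb, _⟩ := hφ b hb
        simp only [hphieq] at hpa hwa
        have hab : a ∈ path F hF b := mem_path_of_le' F hF hpb hpa (le_of_lt hlt)
        have hbne1 : b ≠ a := by
          intro h
          rw [h] at hlt
          omega
        have hbne2 : b ≠ φ b := by
          intro h
          rw [← h] at hzb
          rw [Finset.mem_sdiff] at hzb hb
          exact hzb.2 hb.1
        have hbD : b ∉ D := hwa b hab hpb hbne1 hbne2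
        rw [Finset.mem_sdiff] at hb
        exact hbD (Finset.mem_symmDiff.2 (Or.inr ⟨hb.1, hb.2⟩))
      have hvalne : (m1 : ℕ) ≠ (m2 : ℕ) := fun h => hmne (Fin.ext h)
      rcases hvalne.lt_or_gt with h | h
      · exact key m1 m2 hm1 hm2 hmeq h
      · exact key m2 m1 hm2 hm1 hmeq.symm h
    -- lower bound: shattering a set of size k
    set J0 : Finset (Fin (2 ^ n)) := Finset.univ.image (Fin.castLE hk) with hJ0
    have hJ0card : J0.card = k := by
      rw [hJ0, Finset.card_image_of_injective _ (Fin.castLE_injective hk),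
        Finset.card_univ, Fintype.card_fin]
    set I0 : Finset (Fin n → Bool) := J0.image p with hI0
    have hI0card : I0.card = k := by
      rw [hI0, Finset.card_image_of_injective _ p.injective, hJ0card]
    set R : Finset (Fin (2 ^ n)) → (Fin k → Bool) :=
      fun T t => gT T (p (Fin.castLE hk t)) with hR
    have hRinj : Set.InjOn R J0.powerset := by
      intro T hT T' hT' hRTT'
      by_contra hne
      obtain ⟨m, hmem, hgne⟩ := hsep T T' hne
      have hmJ0 : m ∈ J0 := by
        rcases Finset.mem_symmDiff.1 hmem with h | h
        · exact Finset.mem_powerset.1 (by exact_mod_cast hT) h.1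
        · exact Finset.mem_powerset.1 (by exact_mod_cast hT') h.1
      obtain ⟨t, _, htm⟩ := Finset.mem_image.1 hmJ0
      apply hgne
      have := congrFun hRTT' t
      rw [hR] at this
      simpa [htm] using this
    have hshat : _root_.Shatters ((Finset.univ : Finset ((Fin n → Bool) → Bool)).filter
        (fun g => ∃ T : Finset (Fin (2 ^ n)), T.card ≤ k ∧
          ∀ x, (g x = true ↔ (T.filter (fun i => s i x = true)).card % 2 = 1))) I0 := by
      intro f
      have hcardimg : (J0.powerset.image R).card = Fintype.card (Fin k → Bool) := by
        rw [Finset.card_image_of_injOn hRinj, Finset.card_powerset, hJ0card,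
          Fintype.card_fun, Fintype.card_bool, Fintype.card_fin]
      have huniv : J0.powerset.image R = Finset.univ :=
        Finset.eq_univ_of_card _ hcardimg
      have : (fun t => f (p (Fin.castLE hk t))) ∈ J0.powerset.image R := by
        rw [huniv]; exact Finset.mem_univ _
      obtain ⟨T, hTmem, hTR⟩ := Finset.mem_image.1 this
      have hTsub : T ⊆ J0 := Finset.mem_powerset.1 hTmem
      have hTcard : T.card ≤ k := by
        calc T.card ≤ J0.card := Finset.card_le_card hTsub
        _ = k := hJ0card
      refine ⟨gT T, (hmemB _).2 ⟨T, hTcard, rfl⟩, ?_⟩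
      intro x hx
      obtain ⟨m, hmJ0, hmx⟩ := Finset.mem_image.1 hx
      obtain ⟨t, _, htm⟩ := Finset.mem_image.1 hmJ0
      have := congrFun hTR t
      rw [hR] at this
      simp only at this
      rw [← hmx, ← htm]
      exact this
    -- conclude
    rw [_root_.vcDim]
    apply le_antisymm
    · apply Finset.sup_le
      intro I hImem
      rw [Finset.mem_filter] at hImem
      exact hupper I hImem.2
    · calc k = I0.card := hI0card.symm
        _ ≤ _ := Finset.le_sup (Finset.mem_filter.2 ⟨Finset.mem_univ _, hshat⟩)
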